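/- Let (X, φ) be a size pair with at most finitely many homological 0-critical values, and let w be a homological 0-critical value. If the inclusion-induced map ι_0^{w−ε, w+ε} : Ȟ_0(X_{w−ε}) → Ȟ_0(X_{w+ε}) is not surjective for any sufficiently small ε > 0, then there exists v > w such that w is a discontinuity point of the function u ↦ ℓ_{(X,φ)}(u, v). -/

import Mathlib

universe u v

/-- An abstract packaging of (degree-0) Čech homology with coefficients in a field `K`,
applied to the subspaces of a topological space `X`: absolute groups `Ȟ₀(S)`, relative
groups `Ȟ₀(T, S)`, inclusion-induced homomorphisms, together with the standard
properties of Čech homology on compact Hausdorff pairs with field coefficients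
(rank `Ȟ₀` = number of connected components, functoriality, exactness of the final part
of the homology sequence of a pair). -/
structure CechTheory (X : Type u) [TopologicalSpace X] (K : Type v) [Field K] where
  /-- the 0-th Čech homology group of a subspace -/
  H0 : Set X → Type v
  [h0Add : ∀ S : Set X, AddCommGroup (H0 S)]
  [h0Mod : ∀ S : Set X, Module K (H0 S)]
  /-- the relative 0-th Čech homology group `Ȟ₀(T, S)` -/
  H0rel : Set X → Set X → Type v
  [h0relAdd : ∀ T S : Set X, AddCommGroup (H0rel T S)]
  [h0relMod : ∀ T S : Set X, Module K (H0rel T S)]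
  /-- the homomorphism induced by an inclusion of subspaces -/
  map : ∀ {S T : Set X}, S ⊆ T → (H0 S →ₗ[K] H0 T)
  /-- the homomorphism induced by an inclusion of pairs -/
  maprel : ∀ {T S T' S' : Set X}, T ⊆ T' → S ⊆ S' → (H0rel T S →ₗ[K] H0rel T' S')
  /-- the natural map `Ȟ₀(T) → Ȟ₀(T, S)` -/
  quot : ∀ T S : Set X, H0 T →ₗ[K] H0rel T S
  map_comp : ∀ {S T U : Set X} (h₁ : S ⊆ T) (h₂ : T ⊆ U),
    (map h₂).comp (map h₁) = map (h₁.trans h₂)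
  /-- the homology class of a point -/
  cls : ∀ S : Set X, S → H0 S
  map_cls : ∀ {S T : Set X} (h : S ⊆ T) (x : S), map h (cls S x) = cls T ⟨x.1, h x.2⟩
  cls_eq_iff : ∀ S : Set X, IsCompact S → ∀ x y : S,
    (cls S x = cls S y ↔ connectedComponent x = connectedComponent y)
  cls_span : ∀ S : Set X, IsCompact S →
    Submodule.span K (Set.range (cls S)) = ⊤
  cls_indep : ∀ S : Set X, IsCompact S → ∀ f : ConnectedComponents ↥S → ↥S,
    (∀ c, ConnectedComponents.mk (f c) = c) →
    LinearIndependent K fun c => cls S (f c)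
  quot_surjective : ∀ T S : Set X, S ⊆ T → Function.Surjective (quot T S)
  exact_pair : ∀ {S T : Set X} (h : S ⊆ T),
    LinearMap.range (map h) = LinearMap.ker (quot T S)

attribute [instance] CechTheory.h0Add CechTheory.h0Mod CechTheory.h0relAdd
  CechTheory.h0relMod

open Set

section CC

variable {X : Type u} [TopologicalSpace X]

/-- The map on connected components induced by an inclusion of subsets. -/
noncomputable def ccMap {S T : Set X} (h : S ⊆ T) :
    ConnectedComponents ↥S → ConnectedComponents ↥T :=
  Continuous.connectedComponentsLift
    (ConnectedComponents.continuous_coe.comp (continuous_inclusion h))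

@[simp] lemma ccMap_mk {S T : Set X} (h : S ⊆ T) (x : ↥S) :
    ccMap h (ConnectedComponents.mk x) = ConnectedComponents.mk (Set.inclusion h x) :=
  Continuous.connectedComponentsLift_apply_coe _ x

lemma ccMap_comp {S T U : Set X} (h₁ : S ⊆ T) (h₂ : T ⊆ U) (c : ConnectedComponents ↥S) :
    ccMap h₂ (ccMap h₁ c) = ccMap (h₁.trans h₂) c := by
  obtain ⟨x, rfl⟩ := ConnectedComponents.surjective_coe c
  simp [ccMap_mk]

lemma ccMap_refl {S : Set X} (h : S ⊆ S) (c : ConnectedComponents ↥S) :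
    ccMap h c = c := by
  obtain ⟨x, rfl⟩ := ConnectedComponents.surjective_coe c
  simp [ccMap_mk]

/-- A section of `ConnectedComponents.mk`. -/
noncomputable def ccSection (S : Set X) : ConnectedComponents ↥S → ↥S :=
  Function.surjInv ConnectedComponents.surjective_coe

lemma ccSection_spec (S : Set X) (c : ConnectedComponents ↥S) :
    ConnectedComponents.mk (ccSection S c) = c :=
  Function.surjInv_eq _ c

end CC

section Basis

variable {X : Type u} [TopologicalSpace X] {K : Type v} [Field K] (C : CechTheory X K)

/-- Point classes indexed by connected components form a basis of `H0 S` for compact `S`. -/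
noncomputable def CechTheory.ccBasis {S : Set X} (hS : IsCompact S) :
    Module.Basis (ConnectedComponents ↥S) K (C.H0 S) :=
  Module.Basis.mk (C.cls_indep S hS (ccSection S) (ccSection_spec S))
    (by
      rw [← C.cls_span S hS, Submodule.span_le]
      rintro _ ⟨x, rfl⟩
      have hx : C.cls S x = C.cls S (ccSection S (ConnectedComponents.mk x)) := by
        rw [C.cls_eq_iff S hS]
        exact (ConnectedComponents.coe_eq_coe.mp (ccSection_spec S (ConnectedComponents.mk x))).symm
      rw [hx]
      exact Submodule.subset_span ⟨ConnectedComponents.mk x, rfl⟩)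

lemma CechTheory.ccBasis_apply {S : Set X} (hS : IsCompact S) (x : ↥S) :
    C.ccBasis hS (ConnectedComponents.mk x) = C.cls S x := by
  rw [CechTheory.ccBasis, Module.Basis.mk_apply, C.cls_eq_iff S hS]
  exact ConnectedComponents.coe_eq_coe.mp (ccSection_spec S (ConnectedComponents.mk x))

lemma CechTheory.map_cls' {S T : Set X} (h : S ⊆ T) (x : ↥S) :
    C.map h (C.cls S x) = C.cls T (Set.inclusion h x) := C.map_cls h x

/-- If the induced map on components is surjective, so is the map on `H0`. -/
lemma CechTheory.map_surj_of_cc_surj {S T : Set X} (hT : IsCompact T) (h : S ⊆ T)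
    (hs : Function.Surjective (ccMap (X := X) h)) : Function.Surjective (C.map h) := by
  rw [← LinearMap.range_eq_top, eq_top_iff, ← C.cls_span T hT, Submodule.span_le]
  rintro _ ⟨y, rfl⟩
  obtain ⟨c, hc⟩ := hs (ConnectedComponents.mk y)
  obtain ⟨x, rfl⟩ := ConnectedComponents.surjective_coe c
  rw [ccMap_mk] at hc
  have : C.cls T y = C.cls T (Set.inclusion h x) := by
    rw [C.cls_eq_iff T hT]
    exact (ConnectedComponents.coe_eq_coe.mp hc).symm
  rw [this, ← C.map_cls' h x]
  exact ⟨C.cls S x, rfl⟩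

/-- If the map on `H0` is surjective, so is the induced map on components. -/
lemma CechTheory.cc_surj_of_map_surj {S T : Set X} (hS : IsCompact S) (hT : IsCompact T)
    (h : S ⊆ T) (hs : Function.Surjective (C.map h)) :
    Function.Surjective (ccMap (X := X) h) := by
  intro d
  by_contra hd
  push_neg at hd
  obtain ⟨y, rfl⟩ := ConnectedComponents.surjective_coe d
  have hrange : LinearMap.range (C.map h) ≤
      Submodule.span K ((C.ccBasis hT) '' (Set.range (ccMap (X := X) h))) := by
    rw [LinearMap.range_eq_map, ← C.cls_span S hS, Submodule.map_span, Submodule.span_le]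
    rintro _ ⟨_, ⟨x, rfl⟩, rfl⟩
    apply Submodule.subset_span
    refine ⟨ccMap h (ConnectedComponents.mk x), ⟨_, rfl⟩, ?_⟩
    rw [ccMap_mk, C.ccBasis_apply hT, C.map_cls' h x]
  have hy : C.cls T y ∈ LinearMap.range (C.map h) := by
    rw [← LinearMap.range_eq_top] at hs; rw [hs]; trivial
  have hmem := hrange hy
  rw [← C.ccBasis_apply hT] at hmem
  exact (C.ccBasis hT).linearIndependent.notMem_span_image
    (fun hc => (hd _ hc.choose_spec).elim) hmem

/-- If the map on `H0` is injective, so is the induced map on components. -/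
lemma CechTheory.cc_inj_of_map_inj {S T : Set X} (hS : IsCompact S) (hT : IsCompact T)
    (h : S ⊆ T) (hi : Function.Injective (C.map h)) :
    Function.Injective (ccMap (X := X) h) := by
  intro c₁ c₂ hcc
  obtain ⟨x₁, rfl⟩ := ConnectedComponents.surjective_coe c₁
  obtain ⟨x₂, rfl⟩ := ConnectedComponents.surjective_coe c₂
  rw [ccMap_mk, ccMap_mk] at hcc
  have : C.cls T (Set.inclusion h x₁) = C.cls T (Set.inclusion h x₂) := by
    rw [C.cls_eq_iff T hT]
    exact ConnectedComponents.coe_eq_coe.mp hcc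
  rw [← C.map_cls' h x₁, ← C.map_cls' h x₂] at this
  have := hi this
  rw [ConnectedComponents.coe_eq_coe]
  exact (C.cls_eq_iff S hS x₁ x₂).mp this

end Basis

section Sublevel

variable {X : Type u} [TopologicalSpace X]

lemma sub_mono (φ : X → ℝ) {u u' : ℝ} (h : u ≤ u') :
    {x : X | φ x ≤ u} ⊆ {x : X | φ x ≤ u'} :=
  fun x hx => le_trans hx h

lemma isCompact_sub [CompactSpace X] {φ : X → ℝ} (hφ : Continuous φ) (u : ℝ) :
    IsCompact {x : X | φ x ≤ u} :=
  (isClosed_le hφ continuous_const).isCompact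

/-- The set of connected components of `X_v` meeting `X_u` is finite when `u < v`. -/
lemma counted_finite [CompactSpace X] [LocallyConnectedSpace X] {φ : X → ℝ}
    (hφ : Continuous φ) {u v : ℝ} (huv : u < v) :
    {C : Set ↥{x : X | φ x ≤ v} |
      ∃ p : ↥{x : X | φ x ≤ v}, φ (p : X) ≤ u ∧ C = connectedComponent p}.Finite := by
  set V : Set X := {x : X | φ x ≤ v} with hV
  haveI : CompactSpace ↥V := isCompact_iff_compactSpace.mp (isCompact_sub hφ v)
  set Kset : Set ↥V := {p : ↥V | φ (p : X) ≤ u} with hK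
  have hKc : IsCompact Kset :=
    (isClosed_le (hφ.comp continuous_subtype_val) continuous_const).isCompact
  -- each point of Kset has a neighborhood on which connectedComponent is constant
  have claim : ∀ p : ↥V, p ∈ Kset → ∃ W : Set ↥V, IsOpen W ∧ p ∈ W ∧
      ∀ q ∈ W, connectedComponent q = connectedComponent p := by
    intro p hp
    have hlt : φ (p : X) < v := lt_of_le_of_lt hp huv
    have hnhds : {x : X | φ x < v} ∈ nhds (p : X) :=
      (isOpen_lt hφ continuous_const).mem_nhds hlt
    obtain ⟨U, ⟨hUo, hpU, hUconn⟩, hUsub⟩ :=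
      (LocallyConnectedSpace.open_connected_basis (p : X)).mem_iff.mp hnhds
    have hUV : U ⊆ V := fun x hx => show φ x ≤ v from le_of_lt (show φ x < v from hUsub hx)
    refine ⟨Subtype.val ⁻¹' U, hUo.preimage continuous_subtype_val, hpU, ?_⟩
    -- the preimage is connected: it is the range of the inclusion ↥U → ↥V
    haveI : ConnectedSpace ↥U := Subtype.connectedSpace hUconn
    have hcont : Continuous (fun x : ↥U => (⟨(x : X), hUV x.2⟩ : ↥V)) :=
      Continuous.subtype_mk continuous_subtype_val _
    have hrange : Set.range (fun x : ↥U => (⟨(x : X), hUV x.2⟩ : ↥V))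
        = Subtype.val ⁻¹' U := by
      ext q
      constructor
      · rintro ⟨x, rfl⟩; exact x.2
      · intro hq; exact ⟨⟨(q : X), hq⟩, rfl⟩
    have hconn : IsPreconnected (Subtype.val ⁻¹' U : Set ↥V) := by
      rw [← hrange]; exact (isConnected_range hcont).isPreconnected
    intro q hq
    have h1 : (Subtype.val ⁻¹' U : Set ↥V) ⊆ connectedComponent q :=
      hconn.subset_connectedComponent hq
    exact connectedComponent_eq (h1 hpU)
  choose! W hWopen hWmem hWconst using claim
  obtain ⟨t, htK, hcover⟩ := hKc.elim_nhds_subcover W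
    (fun p hp => (hWopen p hp).mem_nhds (hWmem p hp))
  apply Set.Finite.subset ((t.finite_toSet).image (fun p => connectedComponent p))
  rintro _ ⟨p, hpu, rfl⟩
  have hpK : p ∈ Kset := hpu
  obtain ⟨q, hqt, hpW⟩ := Set.mem_iUnion₂.mp (hcover hpK)
  exact ⟨q, hqt, (hWconst q (htK q hqt) p hpW).symm⟩

end Sublevel

/-- The size function of a size pair: `sizeFun φ u v` is the number of connected
components of the sublevel set `X_v = {φ ≤ v}` containing at least one point of
`X_u = {φ ≤ u}`. -/
noncomputable def sizeFun {X : Type u} [TopologicalSpace X] (φ : X → ℝ) (u v : ℝ) : ℕ :=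
  Set.ncard {C : Set ↥{x : X | φ x ≤ v} |
    ∃ p : ↥{x : X | φ x ≤ v}, φ (p : X) ≤ u ∧ C = connectedComponent p}

/-- `w` is a homological 0-critical value for the size pair `(X, φ)`: for every
sufficiently small `ε > 0`, the map `ι₀^{w-ε,w+ε} : Ȟ₀(X_{w-ε}) → Ȟ₀(X_{w+ε})` induced by
inclusion is not an isomorphism. -/
def CechTheory.IsHomCritical {X : Type u} [TopologicalSpace X] {K : Type v} [Field K]
    (C : CechTheory X K) (φ : X → ℝ) (w : ℝ) : Prop :=
  ∃ ε₀ > (0 : ℝ), ∀ ε : ℝ, ∀ hε : 0 < ε, ε < ε₀ →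
    ¬ Function.Bijective (C.map (show {x : X | φ x ≤ w - ε} ⊆ {x : X | φ x ≤ w + ε} from
      fun x (hx : φ x ≤ w - ε) => show φ x ≤ w + ε from le_trans hx (by linarith)))

section Chain

variable {X : Type u} [TopologicalSpace X] [CompactSpace X] {K : Type v} [Field K]

lemma noncrit_bij (C : CechTheory X K) {φ : X → ℝ} {t : ℝ}
    (hnc : ¬ C.IsHomCritical φ t) {ε₀ : ℝ} (hε₀ : 0 < ε₀) :
    ∃ ε : ℝ, ∃ hε : 0 < ε, ε < ε₀ ∧
      Function.Bijective (C.map (sub_mono φ (show t - ε ≤ t + ε by linarith))) := by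
  unfold CechTheory.IsHomCritical at hnc
  push_neg at hnc
  obtain ⟨ε, hε, hεlt, hbij⟩ := hnc ε₀ hε₀
  exact ⟨ε, hε, hεlt, hbij⟩

lemma chain_inj (C : CechTheory X K) {φ : X → ℝ} (hφ : Continuous φ) {w v : ℝ}
    (hwv : w < v)
    (hnc : ∀ t, w < t → t ≤ v → ¬ C.IsHomCritical φ t) :
    ∀ δ : ℝ, 0 < δ → ∃ s : ℝ, w < s ∧ s < w + δ ∧ ∃ hsv : s ≤ v,
      Function.Injective (ccMap (X := X) (sub_mono φ hsv)) := by
  set A : Set ℝ := {s : ℝ | w < s ∧ ∃ hsv : s ≤ v,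
    Function.Injective (ccMap (X := X) (sub_mono φ hsv))} with hA
  have hvA : v ∈ A := by
    refine ⟨hwv, le_refl v, ?_⟩
    intro c₁ c₂ hc
    rwa [ccMap_refl, ccMap_refl] at hc
  have hne : A.Nonempty := ⟨v, hvA⟩
  have hbdd : BddBelow A := ⟨w, fun s hs => le_of_lt hs.1⟩
  have hs₀w : w ≤ sInf A := le_csInf hne (fun s hs => le_of_lt hs.1)
  have hs₀v : sInf A ≤ v := csInf_le hbdd hvA
  have hkey : ¬ w < sInf A := by
    intro hlt
    set s₀ := sInf A with hs₀
    obtain ⟨η, hη, hηlt, hbij⟩ :=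
      noncrit_bij C (hnc s₀ hlt hs₀v) (show (0:ℝ) < s₀ - w by linarith)
    have hinj1 : Function.Injective
        (ccMap (X := X) (sub_mono φ (show s₀ - η ≤ s₀ + η by linarith))) :=
      C.cc_inj_of_map_inj (isCompact_sub hφ _) (isCompact_sub hφ _) _ hbij.injective
    obtain ⟨s, hsA, hslt⟩ := exists_lt_of_csInf_lt hne (show sInf A < s₀ + η by linarith)
    have hs₀s : s₀ ≤ s := csInf_le hbdd hsA
    obtain ⟨hws, hsv, hinj_s⟩ := hsA
    have h1 : s₀ - η ≤ s := by linarith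
    have h2 : s ≤ s₀ + η := le_of_lt hslt
    have hcomp : Function.Injective
        (fun c => ccMap (X := X) (sub_mono φ h2) (ccMap (X := X) (sub_mono φ h1) c)) := by
      intro c₁ c₂ hc
      exact hinj1 ((ccMap_comp (sub_mono φ h1) (sub_mono φ h2) c₁).symm.trans
        (hc.trans (ccMap_comp (sub_mono φ h1) (sub_mono φ h2) c₂)))
    have hinj_low : Function.Injective (ccMap (X := X) (sub_mono φ h1)) :=
      Function.Injective.of_comp hcomp
    have hinj_v : Function.Injective
        (ccMap (X := X) (sub_mono φ (show s₀ - η ≤ v from le_trans h1 hsv))) := by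
      have hcomp2 := Function.Injective.comp hinj_s hinj_low
      intro c₁ c₂ hc
      exact hcomp2 (show ccMap (X := X) (sub_mono φ hsv) (ccMap (X := X) (sub_mono φ h1) c₁)
          = ccMap (X := X) (sub_mono φ hsv) (ccMap (X := X) (sub_mono φ h1) c₂) from
        (ccMap_comp (sub_mono φ h1) (sub_mono φ hsv) c₁).trans
          (hc.trans (ccMap_comp (sub_mono φ h1) (sub_mono φ hsv) c₂).symm))
    have hmem : s₀ - η ∈ A := ⟨by linarith, le_trans h1 hsv, hinj_v⟩
    have := csInf_le hbdd hmem
    linarith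
  intro δ hδ
  have hlt : sInf A < w + δ := by
    have := not_lt.mp hkey
    linarith
  obtain ⟨s, hsA, hs⟩ := exists_lt_of_csInf_lt hne hlt
  exact ⟨s, hsA.1, hs, hsA.2⟩

end Chain

lemma ccSurj_congr {X : Type u} [TopologicalSpace X] {φ : X → ℝ} {a b b' : ℝ}
    (hb : b = b') (h : a ≤ b) (h' : a ≤ b')
    (hs : Function.Surjective (ccMap (X := X) (sub_mono φ h))) :
    Function.Surjective (ccMap (X := X) (sub_mono φ h')) := by
  subst hb; exact hs

/-- Proposition 3.11 (i): let `(X, φ)` be a size pair with at most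
finitely many homological 0-critical values, and let `w` be a homological 0-critical
value. If the inclusion-induced map `ι₀^{w−ε,w+ε} : Ȟ₀(X_{w−ε}) → Ȟ₀(X_{w+ε})` is not
surjective for any sufficiently small `ε > 0`, then there exists `v > w` such that `w` is
a discontinuity point of `u ↦ ℓ_{(X,φ)}(u, v)`. -/
theorem exists_discontinuity_first_var {X : Type u} [TopologicalSpace X] [CompactSpace X]
    [T2Space X] [LocallyConnectedSpace X] [Nonempty X] {K : Type v} [Field K]
    (C : CechTheory X K) {φ : X → ℝ} (hφ : Continuous φ)
    (hfin : {w : ℝ | C.IsHomCritical φ w}.Finite)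
    {w : ℝ} (hw : C.IsHomCritical φ w)
    (hnsurj : ∃ ε₀ > (0 : ℝ), ∀ ε : ℝ, ∀ hε : 0 < ε, ε < ε₀ →
      ¬ Function.Surjective (C.map (show {x : X | φ x ≤ w - ε} ⊆ {x : X | φ x ≤ w + ε} from
        fun x (hx : φ x ≤ w - ε) => show φ x ≤ w + ε from le_trans hx (by linarith)))) :
    ∃ v > w, ¬ ContinuousAt (fun u : ℝ => (sizeFun φ u v : ℝ)) w := by
  obtain ⟨ε₀, hε₀, hns⟩ := hnsurj
  -- choose a scale `εb` below `ε₀` with no critical values in `(w, w + εb]`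
  obtain ⟨εb, hεb, hεblt, hnc⟩ : ∃ εb : ℝ, 0 < εb ∧ εb < ε₀ ∧
      ∀ t, w < t → t ≤ w + εb → ¬ C.IsHomCritical φ t := by
    by_cases hne : {c : ℝ | C.IsHomCritical φ c ∧ w < c}.Nonempty
    · have hTfin : {c : ℝ | C.IsHomCritical φ c ∧ w < c}.Finite :=
        hfin.subset (fun c hc => hc.1)
      have hmem := Set.Nonempty.csInf_mem hne hTfin
      have hmw : w < sInf {c : ℝ | C.IsHomCritical φ c ∧ w < c} := hmem.2
      refine ⟨min ε₀ (sInf {c : ℝ | C.IsHomCritical φ c ∧ w < c} - w) / 2, ?_, ?_, ?_⟩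
      · have := lt_min hε₀ (show (0:ℝ) < sInf {c : ℝ | C.IsHomCritical φ c ∧ w < c} - w by
          linarith)
        linarith
      · have := min_le_left ε₀ (sInf {c : ℝ | C.IsHomCritical φ c ∧ w < c} - w)
        linarith
      · intro t hwt htle hcrit
        have h1 : sInf {c : ℝ | C.IsHomCritical φ c ∧ w < c} ≤ t :=
          csInf_le hTfin.bddBelow ⟨hcrit, hwt⟩
        have h2 := min_le_right ε₀ (sInf {c : ℝ | C.IsHomCritical φ c ∧ w < c} - w)
        linarith
    · refine ⟨ε₀ / 2, by linarith, by linarith, ?_⟩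
      intro t hwt _ hcrit
      exact hne ⟨t, hcrit, hwt⟩
  refine ⟨w + εb, by linarith, ?_⟩
  intro hcont
  rw [Metric.continuousAt_iff] at hcont
  obtain ⟨δ₀, hδ₀, hcnt⟩ := hcont (1/2) (by norm_num)
  -- pick a level `s` slightly above `w` whose components inject into those of `w + εb`
  obtain ⟨s, hws, hslt, hsv, hinj⟩ := chain_inj C hφ (show w < w + εb by linarith)
    (fun t h1 h2 => hnc t h1 h2) (min δ₀ (min ε₀ εb)) (by positivity)
  have hm1 := min_le_left δ₀ (min ε₀ εb)
  have hm2 := (min_le_right δ₀ (min ε₀ εb)).trans (min_le_left ε₀ εb)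
  have hm3 := (min_le_right δ₀ (min ε₀ εb)).trans (min_le_right ε₀ εb)
  have hsδ₀ : s - w < δ₀ := by linarith
  have hsε₀ : s - w < ε₀ := by linarith
  have hsεb : s - w < εb := by linarith
  -- non-surjectivity of the component map from level `w - (s - w)` to level `s`
  have hkey := hns (s - w) (by linarith) hsε₀
  have hle₁ : w - (s - w) ≤ w + (s - w) := by linarith
  have hle₂ : w - (s - w) ≤ s := by linarith
  have hccns : ¬ Function.Surjective (ccMap (X := X) (sub_mono φ hle₂)) := by
    intro hsurj
    have hsurj' : Function.Surjective (ccMap (X := X) (sub_mono φ hle₁)) :=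
      ccSurj_congr (show s = w + (s - w) by ring) hle₂ hle₁ hsurj
    exact hkey (C.map_surj_of_cc_surj (isCompact_sub hφ _) _ hsurj')
  rw [Function.Surjective] at hccns
  push_neg at hccns
  obtain ⟨d, hd⟩ := hccns
  obtain ⟨p, rfl⟩ := ConnectedComponents.surjective_coe d
  -- the component of `p` in level `v` is counted at parameter `s` but not at `w - (s - w)`
  set P : ↥{x : X | φ x ≤ w + εb} := Set.inclusion (sub_mono φ hsv) p with hP
  set Cu : Set (Set ↥{x : X | φ x ≤ w + εb}) := {C : Set ↥{x : X | φ x ≤ w + εb} |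
    ∃ q : ↥{x : X | φ x ≤ w + εb}, φ (q : X) ≤ w - (s - w) ∧ C = connectedComponent q}
    with hCu
  set Cs : Set (Set ↥{x : X | φ x ≤ w + εb}) := {C : Set ↥{x : X | φ x ≤ w + εb} |
    ∃ q : ↥{x : X | φ x ≤ w + εb}, φ (q : X) ≤ s ∧ C = connectedComponent q} with hCs
  have hfin_s : Cs.Finite := counted_finite hφ (show s < w + εb by linarith)
  have hsubset : Cu ⊆ Cs := by
    rintro _ ⟨q, hq, rfl⟩
    exact ⟨q, by linarith, rfl⟩
  have hDs : connectedComponent P ∈ Cs := ⟨P, p.2, rfl⟩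
  have hDu : connectedComponent P ∉ Cu := by
    rintro ⟨q, hq, hD⟩
    have hqs : φ (q : X) ≤ s := by linarith
    set q' : ↥{x : X | φ x ≤ s} := ⟨(q : X), hqs⟩ with hq'
    set q'' : ↥{x : X | φ x ≤ w - (s - w)} := ⟨(q : X), hq⟩ with hq''
    have h1 : ccMap (X := X) (sub_mono φ hsv) (ConnectedComponents.mk q')
        = ConnectedComponents.mk q := ccMap_mk _ q'
    have h2 : ccMap (X := X) (sub_mono φ hsv) (ConnectedComponents.mk p)
        = ConnectedComponents.mk P := ccMap_mk _ p
    have h3 : ConnectedComponents.mk q = ConnectedComponents.mk P :=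
      ConnectedComponents.coe_eq_coe.mpr hD.symm
    have h4 : ConnectedComponents.mk q' = ConnectedComponents.mk p :=
      hinj (h1.trans (h3.trans h2.symm))
    exact hd (ConnectedComponents.mk q'') ((ccMap_mk (sub_mono φ hle₂) q'').trans h4)
  have hssub : Cu ⊂ Cs := ⟨hsubset, fun hh => hDu (hh hDs)⟩
  have hcard : sizeFun φ (w - (s - w)) (w + εb) < sizeFun φ s (w + εb) :=
    Set.ncard_lt_ncard hssub hfin_s
  have hcast : (sizeFun φ (w - (s - w)) (w + εb) : ℝ) + 1 ≤ sizeFun φ s (w + εb) := by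
    exact_mod_cast hcard
  have e1 : |(sizeFun φ (w - (s - w)) (w + εb) : ℝ) - (sizeFun φ w (w + εb) : ℝ)| < 1/2 := by
    have h := hcnt (show dist (w - (s - w)) w < δ₀ by
      rw [Real.dist_eq, abs_lt]; constructor <;> linarith)
    rw [Real.dist_eq] at h
    exact h
  have e2 : |(sizeFun φ s (w + εb) : ℝ) - (sizeFun φ w (w + εb) : ℝ)| < 1/2 := by
    have h := hcnt (show dist s w < δ₀ by
      rw [Real.dist_eq, abs_lt]; constructor <;> linarith)
    rw [Real.dist_eq] at h
    exact h
  rw [abs_lt] at e1 e2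
  obtain ⟨e1l, e1r⟩ := e1
  obtain ⟨e2l, e2r⟩ := e2
  linarith
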